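/- (Picard surface divisibility lemma, inert case) Let p be a prime and λ = (λ_1, λ_2, λ_3) ∈ Z^3 with λ_1 ≥ λ_2, and let i be an integer with 0 ≤ i ≤ λ_1 − λ_2 satisfying: p | i, (p+1) | (λ_2 + i), (p^2 − 1) | (λ_1 − i − pλ_3), and i ≥ p(pλ_1 − (p−1)λ_2 − λ_3)/(p^2 − p + 1). Then there exist integers k_1, k_2, k_μ ≥ 0 and k_det ∈ Z such that λ = k_1(1,0,p) + k_2(1+p,1,p) + k_μ(p+1, p+1, p^2+p) + k_det(p+1,p+1,p+1) and i = p k_2. -/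
import Mathlib


/-- Divisibility lemma for the inert unitary group `U(3)`: if `λ = (λ₁,λ₂,λ₃) ∈ ℤ³` with
`λ₁ ≥ λ₂` and `0 ≤ i ≤ λ₁ − λ₂` satisfies `p ∣ i`, `(p+1) ∣ (λ₂+i)`,
`(p²−1) ∣ (λ₁−i−pλ₃)` and `i ≥ p(pλ₁ − (p−1)λ₂ − λ₃)/(p²−p+1)`, then `λ` is a
combination `k₁(1,0,p) + k₂(1+p,1,p) + k_μ(p+1,p+1,p²+p) + k_det(p+1,p+1,p+1)` with
`k₁,k₂,k_μ ≥ 0`, `k_det ∈ ℤ` and `i = p k₂`. -/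
theorem stmt9 (p : ℕ) (hp : p.Prime) (l1 l2 l3 i : ℤ)
    (hl : l2 ≤ l1) (hi0 : 0 ≤ i) (hi1 : i ≤ l1 - l2)
    (hd1 : (p : ℤ) ∣ i) (hd2 : ((p : ℤ) + 1) ∣ (l2 + i))
    (hd3 : ((p : ℤ) ^ 2 - 1) ∣ (l1 - i - (p : ℤ) * l3))
    (hF : ((p : ℚ) * ((p : ℚ) * (l1 : ℚ) - ((p : ℚ) - 1) * (l2 : ℚ) - (l3 : ℚ)))
            / ((p : ℚ) ^ 2 - (p : ℚ) + 1) ≤ (i : ℚ)) :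
    ∃ k1 k2 kmu kdet : ℤ, 0 ≤ k1 ∧ 0 ≤ k2 ∧ 0 ≤ kmu ∧
      l1 = k1 * 1 + k2 * (1 + (p : ℤ)) + kmu * ((p : ℤ) + 1) + kdet * ((p : ℤ) + 1) ∧
      l2 = k2 * 1 + kmu * ((p : ℤ) + 1) + kdet * ((p : ℤ) + 1) ∧
      l3 = k1 * (p : ℤ) + k2 * (p : ℤ) + kmu * ((p : ℤ) ^ 2 + (p : ℤ)) + kdet * ((p : ℤ) + 1) ∧
      i = (p : ℤ) * k2 := by
  obtain ⟨k2, hk2⟩ := hd1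
  have hp2 : (2:ℤ) ≤ (p:ℤ) := by exact_mod_cast hp.two_le
  have hk2nn : 0 ≤ k2 := by
    rcases le_or_gt 0 k2 with h | h
    · exact h
    · nlinarith
  -- (p+1) ∣ (l2 - k2)
  have hsdvd : ((p:ℤ)+1) ∣ (l2 - k2) := by
    have h : l2 - k2 = (l2 + i) - ((p:ℤ)+1)*k2 := by rw [hk2]; ring
    rw [h]
    exact dvd_sub hd2 (Dvd.intro k2 rfl)
  obtain ⟨s, hs⟩ := hsdvd
  obtain ⟨t, ht⟩ := hd3
  obtain ⟨u, hu⟩ := hd2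
  -- key quantity N and its relation
  have hpN : (p:ℤ) * (l3 - (p:ℤ)*l1 + ((p:ℤ)-1)*l2 + ((p:ℤ)-1)*i + k2)
      = ((p:ℤ)^2 - 1) * (-l1 - t + (p:ℤ)*u) := by
    linear_combination -ht + (p:ℤ)*((p:ℤ)-1)*hu - hk2
  have hco : IsCoprime ((p:ℤ)) ((p:ℤ)^2 - 1) := ⟨(p:ℤ), -1, by ring⟩
  have hpM : (p:ℤ) ∣ (-l1 - t + (p:ℤ)*u) := by
    refine hco.dvd_of_dvd_mul_right ?_
    exact ⟨l3 - (p:ℤ)*l1 + ((p:ℤ)-1)*l2 + ((p:ℤ)-1)*i + k2, by linarith [hpN]⟩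
  obtain ⟨kmu, hkmu⟩ := hpM
  have hNmu : l3 - (p:ℤ)*l1 + ((p:ℤ)-1)*l2 + ((p:ℤ)-1)*i + k2 = ((p:ℤ)^2 - 1) * kmu := by
    have hp0 : (p:ℤ) ≠ 0 := by linarith
    apply mul_left_cancel₀ hp0
    rw [hpN, hkmu]; ring
  -- integer form of hF
  have hFi : (p:ℤ) * ((p:ℤ)*l1 - ((p:ℤ)-1)*l2 - l3) ≤ i * ((p:ℤ)^2 - (p:ℤ) + 1) := by
    have hden : (0:ℚ) < (p:ℚ)^2 - (p:ℚ) + 1 := by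
      have : (2:ℚ) ≤ (p:ℚ) := by exact_mod_cast hp.two_le
      nlinarith
    rw [div_le_iff₀ hden] at hF
    exact_mod_cast hF
  -- kmu nonneg
  have hNnn : 0 ≤ l3 - (p:ℤ)*l1 + ((p:ℤ)-1)*l2 + ((p:ℤ)-1)*i + k2 := by
    have h1 : (p:ℤ) * (l3 - (p:ℤ)*l1 + ((p:ℤ)-1)*l2 + ((p:ℤ)-1)*i + k2)
        = i * ((p:ℤ)^2 - (p:ℤ) + 1) - (p:ℤ) * ((p:ℤ)*l1 - ((p:ℤ)-1)*l2 - l3)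
          + ((p:ℤ)*k2 - i) := by ring
    have h2 : 0 ≤ (p:ℤ) * (l3 - (p:ℤ)*l1 + ((p:ℤ)-1)*l2 + ((p:ℤ)-1)*i + k2) := by
      rw [h1]; linarith [hFi, hk2]
    nlinarith
  have hmunn : 0 ≤ kmu := by
    rcases le_or_gt 0 kmu with h | h
    · exact h
    · have hq : (0:ℤ) < (p:ℤ)^2 - 1 := by nlinarith
      linarith [mul_neg_of_pos_of_neg hq h, hNmu, hNnn]
  refine ⟨l1 - l2 - i, k2, kmu, s - kmu, by linarith, hk2nn, hmunn, ?_, ?_, ?_, hk2⟩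
  · linear_combination hk2 + hs
  · linear_combination hs
  · linear_combination hNmu + hs + hk2
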